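/- arXiv:math/0701314 — 3 statements merged into one kernel-verified Lean document; each statement's English description precedes it below -/
import Mathlib

section
/- Summing the multinomial coefficients gamma^{(j)}_{i_1,...,i_j} = j!/(i_1!...i_j!(j+1-(i_1+...+i_j))!) over all nonnegative integer tuples (i_1,...,i_j) with i_1 + 2 i_2 + ... + j i_j = j yields the Catalan number C_j = (1/(j+1)) * binomial(2j, j). -/
open Finset Nat

open PowerSeries in
lemma sum_multinomial_key (j : ℕ) :
    ∑ F ∈ (Finset.piAntidiag (Finset.univ : Finset (Fin (j+1))) (j+1)).filter
        (fun F => ∑ m : Fin (j+1), (m : ℕ) * F m = j),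
      (Nat.multinomial Finset.univ F : ℚ) = (Nat.choose (2*j) j : ℚ) := by
  classical
  set P : ℚ⟦X⟧ := ∑ m : Fin (j+1), (X : ℚ⟦X⟧) ^ (m : ℕ) with hP
  have h3 : P * (1 - X) = 1 - X ^ (j+1) := by
    have hgeom := geom_sum_mul (X : ℚ⟦X⟧) (j+1)
    rw [hP, Fin.sum_univ_eq_sum_range (fun m => (X : ℚ⟦X⟧) ^ m)]
    linear_combination -hgeom
  have hval : P ^ (j+1) =
      (1 - X ^ (j+1)) ^ (j+1) * ((invOneSubPow ℚ (j+1)).val) := by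
    have hu : ((1 : ℚ⟦X⟧) - X) ^ (j+1) * (invOneSubPow ℚ (j+1)).val = 1 := by
      rw [← invOneSubPow_inv_eq_one_sub_pow]
      exact (invOneSubPow ℚ (j+1)).inv_val
    calc P ^ (j+1) = P ^ (j+1) * (((1:ℚ⟦X⟧) - X) ^ (j+1) * (invOneSubPow ℚ (j+1)).val) := by
          rw [hu, mul_one]
      _ = (P * (1 - X)) ^ (j+1) * (invOneSubPow ℚ (j+1)).val := by
          rw [← mul_assoc, ← mul_pow]
      _ = (1 - X ^ (j+1)) ^ (j+1) * (invOneSubPow ℚ (j+1)).val := by rw [h3]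
  have hd : (X^(j+1) : ℚ⟦X⟧) ∣ (1 - X^(j+1))^(j+1) - 1 := by
    have h := sub_dvd_pow_sub_pow ((1:ℚ⟦X⟧) - X^(j+1)) 1 (j+1)
    simp only [one_pow] at h
    have h2 : (X^(j+1) : ℚ⟦X⟧) ∣ (1 - X^(j+1)) - 1 := ⟨-1, by ring⟩
    exact h2.trans h
  obtain ⟨q, hq⟩ := hd
  have hexp : ((1:ℚ⟦X⟧) - X^(j+1))^(j+1) = 1 + X^(j+1) * q := by linear_combination hq
  have h1 : PowerSeries.coeff (R := ℚ) j (P ^ (j+1)) = (Nat.choose (2*j) j : ℚ) := by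
    rw [hval, hexp]
    have : ((1:ℚ⟦X⟧) + X^(j+1) * q) * (invOneSubPow ℚ (j+1)).val
        = (invOneSubPow ℚ (j+1)).val + X^(j+1) * (q * (invOneSubPow ℚ (j+1)).val) := by ring
    rw [this, map_add, PowerSeries.coeff_X_pow_mul', if_neg (by omega), add_zero,
      invOneSubPow_val_succ_eq_mk_add_choose, PowerSeries.coeff_mk, ← two_mul]
  have h2 : PowerSeries.coeff (R := ℚ) j (P ^ (j+1)) =
      ∑ F ∈ (Finset.piAntidiag (Finset.univ : Finset (Fin (j+1))) (j+1)).filter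
        (fun F => ∑ m : Fin (j+1), (m : ℕ) * F m = j),
      (Nat.multinomial Finset.univ F : ℚ) := by
    rw [hP, Finset.sum_pow_eq_sum_piAntidiag]
    simp_rw [← pow_mul, Finset.prod_pow_eq_pow_sum]
    rw [map_sum]
    have hterm : ∀ k : Fin (j+1) → ℕ,
        PowerSeries.coeff (R := ℚ) j ((Nat.multinomial Finset.univ k : ℚ⟦X⟧)
            * X ^ (∑ m : Fin (j+1), (m : ℕ) * k m))
        = (Nat.multinomial Finset.univ k : ℚ)
            * (if ∑ m : Fin (j+1), (m : ℕ) * k m = j then 1 else 0) := by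
      intro k
      rw [← map_natCast (PowerSeries.C (R := ℚ)) (Nat.multinomial Finset.univ k),
        PowerSeries.coeff_C_mul, PowerSeries.coeff_X_pow]
      simp [eq_comm]
    simp_rw [hterm]
    rw [Finset.sum_filter]
    simp [mul_ite]
  rw [← h2, h1]

/-- Summing the multinomial coefficients
`γ^{(j)}_{i_1,…,i_j} = j!/(i_1!⋯i_j!(j+1-(i_1+⋯+i_j))!)` over all nonnegative
integer tuples `(i_1,…,i_j)` with `i_1 + 2 i_2 + ⋯ + j i_j = j` yields the
Catalan number `C_j = (1/(j+1)) * binomial (2j) j`. -/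
theorem sum_gamma_eq_catalan (j : ℕ) (hj : 0 < j) :
    (∑ i ∈ (Fintype.piFinset fun _ : Fin j => Finset.range (j + 1)).filter
        (fun i => ∑ k : Fin j, (k.1 + 1) * i k = j),
      (j ! : ℚ) / ((∏ k : Fin j, (i k)!) * (j + 1 - ∑ k : Fin j, i k)!))
      = (1 / (j + 1 : ℚ)) * (Nat.choose (2 * j) j : ℚ) := by
  classical
  rw [← sum_multinomial_key j, Finset.mul_sum]
  refine Finset.sum_nbij' (fun i => Fin.cons (j + 1 - ∑ k, i k) i)
    (fun F => fun k => F k.succ) ?_ ?_ ?_ ?_ ?_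
  · intro i hi
    simp only [Finset.mem_filter, Fintype.mem_piFinset, Finset.mem_range] at hi
    obtain ⟨hrange, hsum⟩ := hi
    have hle : (∑ k, i k) ≤ j := by
      calc (∑ k, i k) ≤ ∑ k : Fin j, (k.1 + 1) * i k :=
            Finset.sum_le_sum fun k _ => Nat.le_mul_of_pos_left _ (Nat.succ_pos _)
        _ = j := hsum
    refine Finset.mem_filter.mpr ⟨Finset.mem_piAntidiag.mpr ⟨?_, fun _ _ => Finset.mem_univ _⟩, ?_⟩
    · rw [Fin.sum_univ_succ]
      simp only [Fin.cons_zero, Fin.cons_succ]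
      omega
    · rw [Fin.sum_univ_succ]
      simp only [Fin.cons_zero, Fin.cons_succ, Fin.val_zero, Fin.val_succ, zero_mul, zero_add]
      exact hsum
  · intro F hF
    simp only [Finset.mem_filter, Finset.mem_piAntidiag] at hF
    obtain ⟨⟨hsum, -⟩, hw⟩ := hF
    simp only [Fintype.mem_piFinset, Finset.mem_range, Finset.mem_filter]
    constructor
    · intro k
      have h1 : (k.succ.1 : ℕ) * F k.succ ≤ ∑ m : Fin (j+1), (m : ℕ) * F m :=
        Finset.single_le_sum (f := fun m : Fin (j+1) => (m : ℕ) * F m)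
          (fun m _ => Nat.zero_le _) (Finset.mem_univ k.succ)
      rw [hw] at h1
      have : F k.succ ≤ (k.succ.1) * F k.succ := Nat.le_mul_of_pos_left _ (by simp [Fin.val_succ])
      omega
    · rw [Fin.sum_univ_succ] at hw
      simpa using hw
  · intro i hi
    funext k
    simp [Fin.cons_succ]
  · intro F hF
    simp only [Finset.mem_filter, Finset.mem_piAntidiag] at hF
    obtain ⟨⟨hsum, -⟩, hw⟩ := hF
    rw [Fin.sum_univ_succ] at hsum
    funext m
    refine Fin.cases ?_ ?_ m
    · simp only [Fin.cons_zero]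
      omega
    · intro k; simp [Fin.cons_succ]
  · intro i hi
    simp only [Finset.mem_filter, Fintype.mem_piFinset, Finset.mem_range] at hi
    obtain ⟨hrange, hsum⟩ := hi
    have hle : (∑ k, i k) ≤ j := by
      calc (∑ k, i k) ≤ ∑ k : Fin j, (k.1 + 1) * i k :=
            Finset.sum_le_sum fun k _ => Nat.le_mul_of_pos_left _ (Nat.succ_pos _)
        _ = j := hsum
    set F : Fin (j+1) → ℕ := Fin.cons (j + 1 - ∑ k, i k) i with hFdef
    have hFsum : ∑ m : Fin (j+1), F m = j + 1 := by
      rw [hFdef, Fin.sum_univ_succ]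
      simp only [Fin.cons_zero, Fin.cons_succ]
      omega
    have hspec := Nat.multinomial_spec (Finset.univ : Finset (Fin (j+1))) F
    rw [hFsum] at hspec
    have hprod : (∏ m : Fin (j+1), (F m)!) = (j + 1 - ∑ k, i k)! * ∏ k : Fin j, (i k)! := by
      rw [hFdef, Fin.prod_univ_succ]
      simp [Fin.cons_zero, Fin.cons_succ]
    have hQ : ((∏ m : Fin (j+1), (F m)!) : ℚ) * (Nat.multinomial Finset.univ F : ℚ)
        = ((j+1)! : ℚ) := by exact_mod_cast congrArg (Nat.cast (R := ℚ)) hspec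
    have hne : ((∏ m : Fin (j+1), (F m)!) : ℚ) ≠ 0 := by positivity
    have hm : (Nat.multinomial Finset.univ F : ℚ)
        = ((j+1)! : ℚ) / ((∏ m : Fin (j+1), (F m)!) : ℚ) := by
      rw [eq_div_iff hne]; linear_combination hQ
    have hcast : ((∏ m : Fin (j+1), (F m)!) : ℚ)
        = ((j + 1 - ∑ k, i k)! : ℚ) * ((∏ k : Fin j, (i k)!) : ℚ) := by
      exact_mod_cast congrArg (Nat.cast (R := ℚ)) hprod
    rw [hm, hcast, Nat.factorial_succ]
    have hne1 : ((j + 1 - ∑ k, i k)! : ℚ) ≠ 0 := Nat.cast_ne_zero.mpr (Nat.factorial_ne_zero _)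
    have hne2 : ((∏ k : Fin j, (i k)!) : ℚ) ≠ 0 := by positivity
    have hne3 : ((j : ℚ) + 1) ≠ 0 := by positivity
    push_cast
    field_simp
end

section
/- In the ring of formal power series in two variables over the rationals, let H(x) = x*M(x) where M(x) = 1 + sum_{j>=1} alpha_j x^j. Then the two-variable series H'(x) H'(y) / (H(x) - H(y))^2 - 1/(x-y)^2 is a well-defined formal power series (the apparent poles at x = y cancel), and its coefficient of x^0 y^0 equals alpha_2 - alpha_1^2. -/
open PowerSeries


namespace SecondOrderAux

variable (α : ℕ → ℚ)

noncomputable def Q : PowerSeries (PowerSeries ℚ) :=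
  mk fun p => mk fun q => α (p + q)

noncomputable def U : PowerSeries (PowerSeries ℚ) :=
  mk fun p => mk fun q => ((p : ℚ) + 1) * α (p + q + 1)

noncomputable def V : PowerSeries (PowerSeries ℚ) :=
  - mk fun p => mk fun q => ((q : ℚ) + 1) * α (p + q + 1)

noncomputable def W : PowerSeries (PowerSeries ℚ) :=
  mk fun p => mk fun q => ((p : ℚ) + 1) * ((q : ℚ) + 1) * α (p + q + 2)

noncomputable def D : PowerSeries (PowerSeries ℚ) := X - C X

noncomputable def Hx : PowerSeries (PowerSeries ℚ) :=
  mk fun n => C (if n = 0 then 0 else α (n - 1))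

noncomputable def Hy : PowerSeries (PowerSeries ℚ) :=
  C (mk fun n => if n = 0 then 0 else α (n - 1))

noncomputable def Bx : PowerSeries (PowerSeries ℚ) :=
  mk fun n => C ((n + 1 : ℚ) * α n)

noncomputable def By : PowerSeries (PowerSeries ℚ) :=
  C (mk fun n => (n + 1 : ℚ) * α n)

lemma coeff_D_mul (f : PowerSeries (PowerSeries ℚ)) (n : ℕ) :
    coeff n (D * f) =
      (if n = 0 then 0 else coeff (n - 1) f) - X * coeff n f := by
  rw [D, sub_mul, map_sub, coeff_C_mul]
  cases n with
  | zero => simp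
  | succ m => simp [coeff_succ_X_mul]

lemma hA : Hx α - Hy α = D * Q α := by
  ext n : 1
  rw [coeff_D_mul, map_sub]
  cases n with
  | zero =>
    ext m : 1
    cases m with
    | zero => simp [Hx, Hy, Q]
    | succ k => simp [Hx, Hy, Q, coeff_succ_X_mul]
  | succ p =>
    ext m : 1
    cases m with
    | zero => simp [Hx, Hy, Q]
    | succ k =>
      simp [Hx, Hy, Q, coeff_succ_X_mul]
      rw [show p + (k + 1) = p + 1 + k by omega, sub_self]


lemma hU : Bx α - Q α = D * U α := by
  ext n : 1
  rw [coeff_D_mul, map_sub]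
  cases n with
  | zero =>
    ext m : 1
    cases m with
    | zero => simp [Bx, Q, U]
    | succ k => simp [Bx, Q, U, coeff_succ_X_mul]
  | succ p =>
    ext m : 1
    cases m with
    | zero => simp [Bx, Q, U]; ring
    | succ k =>
      simp only [Bx, Q, U, map_sub, coeff_mk, coeff_succ_X_mul, coeff_C,
        Nat.succ_ne_zero, if_false]
      rw [show p + 1 + k = p + (k + 1) by omega]
      push_cast
      ring

lemma hV : By α - Q α = D * V α := by
  ext n : 1
  rw [coeff_D_mul, map_sub]
  cases n with
  | zero =>
    ext m : 1
    cases m with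
    | zero => simp [By, Q, V]
    | succ k =>
      simp [By, Q, V, coeff_succ_X_mul]
      push_cast
      ring
  | succ p =>
    ext m : 1
    cases m with
    | zero => simp [By, Q, V]
    | succ k =>
      simp [By, Q, V, coeff_succ_X_mul]
      rw [show p + (k + 1) + 1 = p + 1 + k + 1 by omega]
      push_cast
      ring

lemma hW : U α + V α = D * W α := by
  ext n : 1
  rw [coeff_D_mul, map_add]
  cases n with
  | zero =>
    ext m : 1
    cases m with
    | zero => simp [U, V, W]
    | succ k =>
      simp [U, V, W, coeff_succ_X_mul]
      push_cast
      ring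
  | succ p =>
    ext m : 1
    cases m with
    | zero => simp [U, V, W]; ring
    | succ k =>
      simp [U, V, W, coeff_succ_X_mul]
      rw [show p + 1 + (k + 1) + 1 = p + k + 3 by omega,
        show p + (k + 1) + 2 = p + k + 3 by omega,
        show p + 1 + k + 2 = p + k + 3 by omega]
      push_cast
      ring

lemma hKey : Bx α * By α - Q α ^ 2 = D ^ 2 * (U α * V α + Q α * W α) := by
  have h1 := hU α
  have h2 := hV α
  have h3 := hW α
  linear_combination (Q α + D * V α) * h1 + Bx α * h2 + Q α * D * h3

end SecondOrderAux

open SecondOrderAux in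
/-- In formal power series in two variables (realized as
`ℚ⟦y⟧⟦x⟧`), let `H(x) = x M(x)` with `M(x) = 1 + ∑_{j≥1} α_j x^j` (encoded by
`α : ℕ → ℚ` with `α 0 = 1`). The series
`H'(x)H'(y)/(H(x)-H(y))² - 1/(x-y)²` is a well-defined formal power series `F`,
i.e. `F (H(x)-H(y))² (x-y)² = H'(x)H'(y)(x-y)² - (H(x)-H(y))²`, and its
constant coefficient (of `x⁰y⁰`) equals `α₂ - α₁²`. -/
theorem second_order_series_constant_coeff (α : ℕ → ℚ) (hα : α 0 = 1) :
    ∃ F : PowerSeries (PowerSeries ℚ),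
      F * ((PowerSeries.mk fun n => PowerSeries.C (R := ℚ) (if n = 0 then 0 else α (n - 1)))
            - PowerSeries.C (R := PowerSeries ℚ)
                (PowerSeries.mk fun n => if n = 0 then 0 else α (n - 1))) ^ 2
          * ((PowerSeries.X : PowerSeries (PowerSeries ℚ))
              - PowerSeries.C (R := PowerSeries ℚ) (PowerSeries.X : PowerSeries ℚ)) ^ 2
        = (PowerSeries.mk fun n => PowerSeries.C (R := ℚ) ((n + 1 : ℚ) * α n))
            * PowerSeries.C (R := PowerSeries ℚ) (PowerSeries.mk fun n => (n + 1 : ℚ) * α n)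
            * ((PowerSeries.X : PowerSeries (PowerSeries ℚ))
                - PowerSeries.C (R := PowerSeries ℚ) (PowerSeries.X : PowerSeries ℚ)) ^ 2
          - ((PowerSeries.mk fun n => PowerSeries.C (R := ℚ) (if n = 0 then 0 else α (n - 1)))
              - PowerSeries.C (R := PowerSeries ℚ)
                  (PowerSeries.mk fun n => if n = 0 then 0 else α (n - 1))) ^ 2
      ∧ PowerSeries.constantCoeff (R := ℚ) (PowerSeries.constantCoeff (R := PowerSeries ℚ) F)
          = α 2 - (α 1) ^ 2 := by
  obtain ⟨u, hu⟩ : IsUnit (Q α) := by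
    rw [PowerSeries.isUnit_iff_constantCoeff, PowerSeries.isUnit_iff_constantCoeff]
    simp [Q, hα]
  set Qi : PowerSeries (PowerSeries ℚ) := ↑u⁻¹ with hQidef
  have hQQi : Q α * Qi = 1 := by
    rw [hQidef, ← hu]
    exact_mod_cast u.mul_inv
  refine ⟨(U α * V α + Q α * W α) * Qi ^ 2, ?_, ?_⟩
  · show (U α * V α + Q α * W α) * Qi ^ 2 * (Hx α - Hy α) ^ 2 * D ^ 2
      = Bx α * By α * D ^ 2 - (Hx α - Hy α) ^ 2
    rw [hA α]
    have key := hKey α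
    linear_combination (-(D ^ 2)) * key
      + D ^ 4 * (U α * V α + Q α * W α) * (Qi * Q α + 1) * hQQi
  · have h1 : (constantCoeff (R := ℚ)) ((constantCoeff (R := PowerSeries ℚ)) Qi) = 1 := by
      have h2 := congrArg
        (fun f => (constantCoeff (R := ℚ)) ((constantCoeff (R := PowerSeries ℚ)) f)) hQQi
      simpa [Q, hα] using h2
    simp [U, V, W, Q, hα, h1]
    ring
end

section
/- With H(x) = x(1 + alpha_1 x + alpha_2 x^2 + ...), the coefficient of x^1 y^0 in the formal power series H'(x)H'(y)/(H(x)-H(y))^2 - 1/(x-y)^2 equals 2*alpha_3 - 4*alpha_1*alpha_2 + 2*alpha_1^3. -/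
open PowerSeries

namespace Stmt10

noncomputable def U (α : ℕ → ℚ) : PowerSeries (PowerSeries ℚ) :=
  mk fun i => mk fun j => α (i + j)
noncomputable def Ux (α : ℕ → ℚ) : PowerSeries (PowerSeries ℚ) :=
  mk fun i => mk fun j => ((i : ℚ) + 1) * α (i + j + 1)
noncomputable def Uy (α : ℕ → ℚ) : PowerSeries (PowerSeries ℚ) :=
  mk fun i => mk fun j => ((j : ℚ) + 1) * α (i + j + 1)
noncomputable def Uxy (α : ℕ → ℚ) : PowerSeries (PowerSeries ℚ) :=
  mk fun i => mk fun j => ((i : ℚ) + 1) * (((j : ℚ) + 1) * α (i + j + 2))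
noncomputable def Dx : PowerSeries (PowerSeries ℚ) :=
  X - C (R := PowerSeries ℚ) X
noncomputable def Px (α : ℕ → ℚ) : PowerSeries (PowerSeries ℚ) :=
  mk fun n => C (R := ℚ) ((n + 1 : ℚ) * α n)
noncomputable def Py (α : ℕ → ℚ) : PowerSeries (PowerSeries ℚ) :=
  C (R := PowerSeries ℚ) (mk fun n => (n + 1 : ℚ) * α n)
noncomputable def Hx (α : ℕ → ℚ) : PowerSeries (PowerSeries ℚ) :=
  mk fun n => C (R := ℚ) (if n = 0 then 0 else α (n - 1))
noncomputable def Hy (α : ℕ → ℚ) : PowerSeries (PowerSeries ℚ) :=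
  C (R := PowerSeries ℚ) (mk fun n => if n = 0 then 0 else α (n - 1))

lemma coeff_Dx_mul (S : PowerSeries (PowerSeries ℚ)) (n j : ℕ) :
    coeff (R := ℚ) j (coeff (R := PowerSeries ℚ) n (Dx * S)) =
      (if n = 0 then 0 else coeff (R := ℚ) j (coeff (R := PowerSeries ℚ) (n - 1) S))
        - (if j = 0 then 0 else coeff (R := ℚ) (j - 1) (coeff (R := PowerSeries ℚ) n S)) := by
  rw [Dx, sub_mul, map_sub, map_sub]
  rcases n with _ | n <;> rcases j with _ | j <;>
    simp [coeff_zero_X_mul, coeff_succ_X_mul, coeff_C_mul]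

lemma lemA (α : ℕ → ℚ) : Dx * U α = Hx α - Hy α := by
  ext n j
  rw [map_sub, map_sub, coeff_Dx_mul]
  rcases n with _ | n <;> rcases j with _ | j <;>
    simp [U, Hx, Hy, coeff_mk, coeff_C]
  rw [show n + (j + 1) = n + 1 + j from by omega, sub_self]

lemma cf_Px (α : ℕ → ℚ) (n j : ℕ) :
    coeff (R := ℚ) j (coeff (R := PowerSeries ℚ) n (Px α)) = if j = 0 then ((n : ℚ) + 1) * α n else 0 := by
  simp only [Px, coeff_mk, coeff_C]

lemma lemB (α : ℕ → ℚ) : U α + Dx * Ux α = Px α := by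
  ext n j
  rw [map_add, map_add, coeff_Dx_mul, cf_Px]
  rcases n with _ | n <;> rcases j with _ | j <;>
    simp [U, Ux, coeff_mk]
  · ring
  · rw [show n + (j + 1) + 1 = n + 1 + j + 1 from by omega,
      show n + 1 + (j + 1) = n + 1 + j + 1 from by omega]
    ring

lemma lemC (α : ℕ → ℚ) : Dx * Uy α = U α - Py α := by
  ext n j
  rw [map_sub, map_sub, coeff_Dx_mul]
  rcases n with _ | n <;> rcases j with _ | j <;>
    simp [U, Uy, Py, coeff_mk, coeff_C]
  · ring
  · rw [show n + (j + 1) + 1 = n + 1 + j + 1 from by omega,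
      show n + 1 + (j + 1) = n + 1 + j + 1 from by omega]
    ring

lemma lemD (α : ℕ → ℚ) : Uy α - Ux α + Dx * Uxy α = 0 := by
  ext n j
  rw [map_add, map_add, map_sub, map_sub, coeff_Dx_mul]
  rcases n with _ | n <;> rcases j with _ | j <;>
    simp [Ux, Uy, Uxy, coeff_mk]
  · ring
  · ring
  · rw [show n + (j + 1) + 2 = n + 1 + (j + 1) + 1 from by omega,
      show n + 1 + j + 2 = n + 1 + (j + 1) + 1 from by omega]
    ring

lemma lemE (α : ℕ → ℚ) :
    Dx ^ 2 * (U α * Uxy α - Ux α * Uy α) = Px α * Py α - U α ^ 2 := by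
  linear_combination (U α * Dx) * lemD α - (U α + Dx * Ux α) * lemC α + Py α * lemB α

lemma hmapU (α : ℕ → ℚ) :
    map (constantCoeff (R := ℚ)) (U α) = mk fun i => α i := by
  ext i
  simp [U, coeff_map, coeff_mk, constantCoeff_mk]

lemma hmapUx (α : ℕ → ℚ) :
    map (constantCoeff (R := ℚ)) (Ux α) = mk fun i => ((i : ℚ) + 1) * α (i + 1) := by
  ext i
  simp [Ux, coeff_map, coeff_mk, constantCoeff_mk]

lemma hmapUy (α : ℕ → ℚ) :
    map (constantCoeff (R := ℚ)) (Uy α) = mk fun i => α (i + 1) := by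
  ext i
  simp [Uy, coeff_map, coeff_mk, constantCoeff_mk]

lemma hmapUxy (α : ℕ → ℚ) :
    map (constantCoeff (R := ℚ)) (Uxy α) = mk fun i => ((i : ℚ) + 1) * α (i + 2) := by
  ext i
  simp [Uxy, coeff_map, coeff_mk, constantCoeff_mk]

end Stmt10


open Stmt10 in
/-- In formal power series in two variables (realized as
`ℚ⟦y⟧⟦x⟧`), let `H(x) = x M(x)` with `M(x) = 1 + ∑_{j≥1} α_j x^j` (encoded by
`α : ℕ → ℚ` with `α 0 = 1`). The series
`H'(x)H'(y)/(H(x)-H(y))² - 1/(x-y)²` is a well-defined formal power series `F`,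
i.e. `F (H(x)-H(y))² (x-y)² = H'(x)H'(y)(x-y)² - (H(x)-H(y))²`, and its
coefficient of `x¹y⁰` equals `2α₃ - 4α₁α₂ + 2α₁³` (Table 3 of the paper). -/
theorem second_order_series_coeff_x1y0 (α : ℕ → ℚ) (hα : α 0 = 1) :
    ∃ F : PowerSeries (PowerSeries ℚ),
      F * ((PowerSeries.mk fun n => PowerSeries.C (R := ℚ) (if n = 0 then 0 else α (n - 1)))
            - PowerSeries.C (R := PowerSeries ℚ)
                (PowerSeries.mk fun n => if n = 0 then 0 else α (n - 1))) ^ 2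
          * ((PowerSeries.X : PowerSeries (PowerSeries ℚ))
              - PowerSeries.C (R := PowerSeries ℚ) (PowerSeries.X : PowerSeries ℚ)) ^ 2
        = (PowerSeries.mk fun n => PowerSeries.C (R := ℚ) ((n + 1 : ℚ) * α n))
            * PowerSeries.C (R := PowerSeries ℚ) (PowerSeries.mk fun n => (n + 1 : ℚ) * α n)
            * ((PowerSeries.X : PowerSeries (PowerSeries ℚ))
                - PowerSeries.C (R := PowerSeries ℚ) (PowerSeries.X : PowerSeries ℚ)) ^ 2
          - ((PowerSeries.mk fun n => PowerSeries.C (R := ℚ) (if n = 0 then 0 else α (n - 1)))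
              - PowerSeries.C (R := PowerSeries ℚ)
                  (PowerSeries.mk fun n => if n = 0 then 0 else α (n - 1))) ^ 2
      ∧ PowerSeries.constantCoeff (R := ℚ) (PowerSeries.coeff (R := PowerSeries ℚ) 1 F)
          = 2 * α 3 - 4 * α 1 * α 2 + 2 * (α 1) ^ 3 := by
  -- U is a unit
  have hunit : IsUnit (U α) := by
    rw [PowerSeries.isUnit_iff_constantCoeff]
    have : constantCoeff (R := PowerSeries ℚ) (U α) = mk fun j => α j := by
      simp [U, ← coeff_zero_eq_constantCoeff, coeff_mk]
    rw [this, PowerSeries.isUnit_iff_constantCoeff, constantCoeff_mk, hα]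
    exact isUnit_one
  obtain ⟨u, hu⟩ := hunit
  have hUV : U α * ↑u⁻¹ = 1 := by rw [← hu]; exact u.mul_inv
  refine ⟨(U α * Uxy α - Ux α * Uy α) * (↑u⁻¹ : PowerSeries (PowerSeries ℚ)) ^ 2, ?_, ?_⟩
  · show (U α * Uxy α - Ux α * Uy α) * (↑u⁻¹ : PowerSeries (PowerSeries ℚ)) ^ 2
        * (Hx α - Hy α) ^ 2 * Dx ^ 2
      = Px α * Py α * Dx ^ 2 - (Hx α - Hy α) ^ 2
    rw [← lemA α]
    linear_combination Dx ^ 2 * lemE α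
      + (U α * Uxy α - Ux α * Uy α) * Dx ^ 4 * (U α * ↑u⁻¹ + 1) * hUV
  · -- coefficient computation via map (constantCoeff (R := ℚ))
    rw [← coeff_map]
    simp only [map_mul, map_sub, map_pow]
    rw [hmapU α, hmapUx α, hmapUy α, hmapUxy α]
    set b : PowerSeries ℚ := map (constantCoeff (R := ℚ)) (↑u⁻¹ : PowerSeries (PowerSeries ℚ)) with hbdef
    have hb : (mk fun i => α i) * b = 1 := by
      rw [← hmapU α, hbdef, ← map_mul, hUV, map_one]
    have hb0 : constantCoeff (R := ℚ) b = 1 := by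
      have := congrArg (constantCoeff (R := ℚ)) hb
      simp only [map_mul, map_one, constantCoeff_mk, hα, one_mul] at this
      exact this
    have hb1 : coeff (R := ℚ) 1 b = -α 1 := by
      have := congrArg (coeff (R := ℚ) 1) hb
      rw [coeff_one_mul] at this
      simp only [coeff_mk, constantCoeff_mk, hα, hb0, mul_one, one_mul, map_one, coeff_one] at this
      norm_num at this
      linarith
    simp only [sq, coeff_one_mul, map_sub, map_mul, coeff_mk, constantCoeff_mk, hb0, hb1, hα]
    push_cast
    ring
end
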